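/- For a complete simplicial multi-fan Δ of dimension n, the h-numbers satisfy the symmetry h_q(Δ) = h_{n−q}(Δ) for all 0 ≤ q ≤ n. -/

import Mathlib

open Finset

/-- The pairing between a covector and a vector in `ℝⁿ`. -/
def dotp {n : ℕ} (x y : Fin n → ℝ) : ℝ := ∑ k, x k * y k

/-- A (simplicial) multi-fan of dimension `n` with rays indexed by `{1,…,d}`:
an augmented simplicial set `S`, ray vectors `v i` spanning the simplicial cones
`C(I) = pos span {v i : i ∈ I}`, and a weight `w` on simplices (the difference
`w = w⁺ − w⁻` of the two weight functions, restricted to top simplices is what matters). -/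
structure MultiFan (n d : ℕ) where
  S : Finset (Finset (Fin d))
  empty_mem : ∅ ∈ S
  downClosed : ∀ I ∈ S, ∀ J ⊆ I, J ∈ S
  card_le : ∀ I ∈ S, I.card ≤ n
  v : Fin d → (Fin n → ℝ)
  indep : ∀ I ∈ S, LinearIndependent ℝ (fun i : {x // x ∈ I} => v i.1)
  w : Finset (Fin d) → ℤ

namespace MultiFan

variable {n d : ℕ}

/-- `x` is generic for the projected multi-fan `Δ_K`: it avoids every linear subspace
spanned by a cone (containing `C(K)`) of dimension `< n`. -/
def GenericFor (Δ : MultiFan n d) (K : Finset (Fin d)) (x : Fin n → ℝ) : Prop :=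
  ∀ L ∈ Δ.S, K ⊆ L → L.card < n → x ∉ Submodule.span ℝ (Δ.v '' (L : Set (Fin d)))

def Generic (Δ : MultiFan n d) (x : Fin n → ℝ) : Prop := Δ.GenericFor ∅ x

/-- `x` lies (mod the span of `C(K)`) in the projected cone `C_K(I)`. -/
def InProjCone (Δ : MultiFan n d) (K I : Finset (Fin d)) (x : Fin n → ℝ) : Prop :=
  ∃ a : Fin d → ℝ, (∀ j ∈ I \ K, 0 ≤ a j) ∧
    (x - ∑ j ∈ I \ K, a j • Δ.v j) ∈ Submodule.span ℝ (Δ.v '' (K : Set (Fin d)))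

open scoped Classical in
/-- `d_x` for the projected multi-fan `Δ_K`: the sum of the weights of top cones whose
projection contains the projection of `x`. -/
noncomputable def dv (Δ : MultiFan n d) (K : Finset (Fin d)) (x : Fin n → ℝ) : ℤ :=
  ∑ I ∈ Δ.S.filter (fun I => I.card = n ∧ K ⊆ I ∧ Δ.InProjCone K I x), Δ.w I

/-- Pre-completeness of the projected multi-fan `Δ_K`. -/
def PreCompleteAt (Δ : MultiFan n d) (K : Finset (Fin d)) : Prop :=
  (∃ I ∈ Δ.S, K ⊆ I ∧ I.card = n) ∧
  ∀ x y : Fin n → ℝ, Δ.GenericFor K x → Δ.GenericFor K y → Δ.dv K x = Δ.dv K y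

/-- Completeness: every projected multi-fan is pre-complete. -/
def Complete (Δ : MultiFan n d) : Prop := ∀ K ∈ Δ.S, Δ.PreCompleteAt K

open scoped Classical in
/-- The Duistermaat–Heckman function of the simple multi-polytope `(Δ, {F_i})`, where
`F_i = {u : ⟨u, v i⟩ = c i}`, the data `uu I i = u_i^I` is the dual basis of `{v i : i ∈ I}`
and `ξ ∈ V` is a generic vector.  For `I ∈ Σ^{(n)}` the coefficient of `u − u_I` on `u_i^I`
is `⟨u, v i⟩ − c i`, so membership in the cone `C^*(I)^+` is expressed by the conditions below. -/
noncomputable def DH (Δ : MultiFan n d) (c : Fin d → ℝ)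
    (uu : Finset (Fin d) → Fin d → (Fin n → ℝ)) (ξ : Fin n → ℝ) (u : Fin n → ℝ) : ℤ :=
  ∑ I ∈ Δ.S.filter (fun I => I.card = n),
    if (∀ i ∈ I, (0 < dotp (uu I i) ξ ∧ c i ≤ dotp u (Δ.v i)) ∨
                 (dotp (uu I i) ξ < 0 ∧ dotp u (Δ.v i) ≤ c i))
    then (-1 : ℤ) ^ (I.filter fun i => 0 < dotp (uu I i) ξ).card * Δ.w I
    else 0

/-- `uu I i = u_i^I` is the basis dual to `{v i : i ∈ I}` for each top simplex `I`. -/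
def DualBasis (Δ : MultiFan n d) (uu : Finset (Fin d) → Fin d → (Fin n → ℝ)) : Prop :=
  ∀ I ∈ Δ.S, I.card = n → ∀ i ∈ I, ∀ j ∈ I,
    dotp (uu I i) (Δ.v j) = if i = j then 1 else 0

/-- Genericity of `ξ` needed for the DH function: `⟨u_i^I, ξ⟩ ≠ 0` for all `I, i`. -/
def GenericDual (Δ : MultiFan n d) (uu : Finset (Fin d) → Fin d → (Fin n → ℝ))
    (ξ : Fin n → ℝ) : Prop :=
  ∀ I ∈ Δ.S, I.card = n → ∀ i ∈ I, dotp (uu I i) ξ ≠ 0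

end MultiFan



namespace MFAux

theorem coeff_unique {n d : ℕ} (Δ : MultiFan n d) {I : Finset (Fin d)} (hI : I ∈ Δ.S)
    (b c : Fin d → ℝ) (h : ∑ i ∈ I, b i • Δ.v i = ∑ i ∈ I, c i • Δ.v i) :
    ∀ i ∈ I, b i = c i := by
  have li := Δ.indep I hI
  rw [Fintype.linearIndependent_iff] at li
  have h0 : ∑ i : {x // x ∈ I}, (b i.1 - c i.1) • Δ.v i.1 = 0 := by
    rw [Finset.sum_coe_sort I (fun i => (b i - c i) • Δ.v i)]
    simp [sub_smul, Finset.sum_sub_distrib, h]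
  have := li (fun i => b i.1 - c i.1) h0
  intro i hi
  have h2 := this ⟨i, hi⟩
  simpa [sub_eq_zero] using h2

theorem inj_on {n d : ℕ} (Δ : MultiFan n d) {I K : Finset (Fin d)} (hI : I ∈ Δ.S)
    (hK : K ⊆ I) : ∀ j ∈ K, ∀ k ∈ K, Δ.v j = Δ.v k → j = k := by
  intro j hj k hk h
  have li := Δ.indep I hI
  have h2 := li.injective (a₁ := ⟨j, hK hj⟩) (a₂ := ⟨k, hK hk⟩) h
  exact Subtype.ext_iff.mp h2

theorem mem_span_iff {n d : ℕ} (Δ : MultiFan n d) {K : Finset (Fin d)}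
    (hinj : ∀ j ∈ K, ∀ k ∈ K, Δ.v j = Δ.v k → j = k) (y : Fin n → ℝ) :
    y ∈ Submodule.span ℝ (Δ.v '' (K : Set (Fin d))) ↔
      ∃ c : Fin d → ℝ, ∑ k ∈ K, c k • Δ.v k = y := by
  constructor
  · intro hy
    rw [← Finset.coe_image, Submodule.mem_span_finset] at hy
    obtain ⟨f, -, hf⟩ := hy
    exact ⟨fun k => f (Δ.v k), by rw [← hf, Finset.sum_image hinj]⟩
  · rintro ⟨c, rfl⟩
    exact Submodule.sum_mem _ fun k hk => Submodule.smul_mem _ _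
      (Submodule.subset_span ⟨k, Finset.mem_coe.mpr hk, rfl⟩)

end MFAux
namespace MFAux

theorem inProjCone_iff {n d : ℕ} (Δ : MultiFan n d) {I K : Finset (Fin d)} (hI : I ∈ Δ.S)
    (hK : K ⊆ I) (x : Fin n → ℝ) (b : Fin d → ℝ) (hb : x = ∑ i ∈ I, b i • Δ.v i) :
    Δ.InProjCone K I x ↔ ∀ j ∈ I \ K, 0 ≤ b j := by
  classical
  constructor
  · rintro ⟨α, hα, hmem⟩
    rw [mem_span_iff Δ (inj_on Δ hI hK)] at hmem
    obtain ⟨c, hc⟩ := hmem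
    set e : Fin d → ℝ := fun j => if j ∈ K then c j else α j with he
    have hxe : x = ∑ i ∈ I, e i • Δ.v i := by
      rw [← Finset.sum_sdiff hK (f := fun i => e i • Δ.v i)]
      have h1 : ∑ i ∈ I \ K, e i • Δ.v i = ∑ i ∈ I \ K, α i • Δ.v i :=
        Finset.sum_congr rfl fun i hi => by
          simp [he, (Finset.mem_sdiff.mp hi).2]
      have h2 : ∑ i ∈ K, e i • Δ.v i = ∑ i ∈ K, c i • Δ.v i :=
        Finset.sum_congr rfl fun i hi => by simp [he, hi]
      rw [h1, h2, hc]
      abel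
    have heq := coeff_unique Δ hI b e (by rw [← hb, ← hxe])
    intro j hj
    have hj' := Finset.mem_sdiff.mp hj
    have := heq j hj'.1
    rw [this, he]
    simpa [hj'.2] using hα j hj
  · intro hpos
    refine ⟨b, hpos, ?_⟩
    rw [mem_span_iff Δ (inj_on Δ hI hK)]
    refine ⟨b, ?_⟩
    have h := Finset.sum_sdiff hK (f := fun i => b i • Δ.v i)
    rw [hb, eq_sub_iff_add_eq, add_comm]
    exact h

open scoped Classical in
theorem dv_formula {n d : ℕ} (Δ : MultiFan n d) (K : Finset (Fin d)) (x : Fin n → ℝ)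
    (b : Finset (Fin d) → Fin d → ℝ)
    (hb : ∀ I ∈ Δ.S, I.card = n → x = ∑ i ∈ I, b I i • Δ.v i) :
    Δ.dv K x = ∑ I ∈ Δ.S.filter (fun I => I.card = n ∧ K ⊆ I ∧ ∀ j ∈ I \ K, 0 ≤ b I j),
      Δ.w I := by
  unfold MultiFan.dv
  apply Finset.sum_congr _ (fun _ _ => rfl)
  ext I
  simp only [Finset.mem_filter]
  constructor
  · rintro ⟨hI, h1, h2, h3⟩
    exact ⟨hI, h1, h2, (inProjCone_iff Δ hI h2 x (b I) (hb I hI h1)).mp h3⟩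
  · rintro ⟨hI, h1, h2, h3⟩
    exact ⟨hI, h1, h2, (inProjCone_iff Δ hI h2 x (b I) (hb I hI h1)).mpr h3⟩

theorem count_sub {α : Type*} [DecidableEq α] (I N : Finset α) (hN : N ⊆ I) (m : ℕ)
    (hm : m ≤ I.card) :
    ((I.powerset).filter (fun K => N ⊆ K ∧ K.card = m)).card
      = (I.card - N.card).choose (I.card - m) := by
  rw [← Finset.card_sdiff_of_subset hN, ← Finset.card_powersetCard]
  apply Finset.card_bij (fun K _ => I \ K)
  · intro K hK
    simp only [Finset.mem_filter, Finset.mem_powerset] at hK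
    obtain ⟨hKI, hNK, hKm⟩ := hK
    rw [Finset.mem_powersetCard]
    exact ⟨Finset.sdiff_subset_sdiff (Finset.Subset.refl I) hNK,
      by rw [Finset.card_sdiff_of_subset hKI, hKm]⟩
  · intro K1 h1 K2 h2 h
    simp only [Finset.mem_filter, Finset.mem_powerset] at h1 h2
    rw [← Finset.sdiff_sdiff_eq_self h1.1, h, Finset.sdiff_sdiff_eq_self h2.1]
  · intro J hJ
    rw [Finset.mem_powersetCard] at hJ
    obtain ⟨hJIN, hJc⟩ := hJ
    have hJI : J ⊆ I := hJIN.trans (Finset.sdiff_subset)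
    refine ⟨I \ J, ?_, Finset.sdiff_sdiff_eq_self hJI⟩
    simp only [Finset.mem_filter, Finset.mem_powerset]
    refine ⟨Finset.sdiff_subset, ?_, ?_⟩
    · intro j hj
      rw [Finset.mem_sdiff]
      refine ⟨hN hj, fun hjJ => ?_⟩
      have := hJIN hjJ
      rw [Finset.mem_sdiff] at this
      exact this.2 hj
    · rw [Finset.card_sdiff_of_subset hJI, hJc, Nat.sub_sub_self hm]

theorem vanish (n : ℕ) (F : ℕ → ℤ)
    (h : ∀ t, t ≤ n → ∑ q ∈ Finset.range (n+1), F q * (q.choose t : ℤ) = 0) :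
    ∀ t, t ≤ n → F t = 0 := by
  have key : ∀ j, ∀ t, t ≤ n → n - t ≤ j → F t = 0 := by
    intro j
    induction j with
    | zero =>
      intro t ht hj
      have hsum := h t ht
      rw [Finset.sum_eq_single t (fun q hq hqt => ?_) (fun h' => absurd
        (Finset.mem_range.mpr (by omega)) h')] at hsum
      · simpa using hsum
      · have hq' := Finset.mem_range.mp hq
        rcases lt_or_gt_of_ne hqt with hlt | hgt
        · rw [Nat.choose_eq_zero_of_lt hlt]; ring
        · omega
    | succ j ih =>
      intro t ht hj
      have hsum := h t ht
      rw [Finset.sum_eq_single t (fun q hq hqt => ?_) (fun h' => absurd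
        (Finset.mem_range.mpr (by omega)) h')] at hsum
      · simpa using hsum
      · have hq' := Finset.mem_range.mp hq
        rcases lt_or_gt_of_ne hqt with hlt | hgt
        · rw [Nat.choose_eq_zero_of_lt hlt]; ring
        · rw [ih q (by omega) (by omega)]; ring
  intro t ht
  exact key n t ht (by omega)

end MFAux
/-- Symmetry of the h-numbers of a complete simplicial multi-fan: `h_q(Δ) = h_{n−q}(Δ)`. -/
theorem stmt2 (n d : ℕ) (Δ : MultiFan n d) (hC : Δ.Complete)
    (x : Fin n → ℝ) (hx : Δ.Generic x)
    (a : Finset (Fin d) → Fin d → ℝ)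
    (ha : ∀ I ∈ Δ.S, I.card = n → x = ∑ i ∈ I, a I i • Δ.v i) :
    ∀ q : ℕ, q ≤ n →
      ∑ I ∈ Δ.S.filter (fun I => I.card = n ∧
          (I.filter fun i => 0 < a I i).card = q), Δ.w I
    = ∑ I ∈ Δ.S.filter (fun I => I.card = n ∧
          (I.filter fun i => 0 < a I i).card = n - q), Δ.w I := by
  intro q hq
  -- Step 1: all coefficients of a top simplex are nonzero, by genericity.
  have hne : ∀ I ∈ Δ.S, I.card = n → ∀ i ∈ I, a I i ≠ 0 := by
    intro I hI hIc i hi ha0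
    have hL : I.erase i ∈ Δ.S := Δ.downClosed I hI _ (Finset.erase_subset i I)
    have hposc : 0 < I.card := Finset.card_pos.mpr ⟨i, hi⟩
    have hcard : (I.erase i).card < n := by
      rw [Finset.card_erase_of_mem hi]; omega
    refine hx (I.erase i) hL (Finset.empty_subset _) hcard ?_
    have hxsum : x = ∑ j ∈ I.erase i, a I j • Δ.v j := by
      rw [ha I hI hIc, ← Finset.add_sum_erase I _ hi, ha0]
      simp
    rw [hxsum]
    exact Submodule.sum_mem _ fun j hj => Submodule.smul_mem _ _
      (Submodule.subset_span ⟨j, Finset.mem_coe.mpr hj, rfl⟩)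
  -- sign conditions as subset conditions
  have hcond1 : ∀ (K I : Finset (Fin d)),
      ((∀ j ∈ I \ K, 0 ≤ a I j) ↔ I.filter (fun i => a I i < 0) ⊆ K) := by
    intro K I
    constructor
    · intro h j hj
      rw [Finset.mem_filter] at hj
      by_contra hjK
      exact absurd (h j (Finset.mem_sdiff.mpr ⟨hj.1, hjK⟩)) (not_le.mpr hj.2)
    · intro h j hj
      rw [Finset.mem_sdiff] at hj
      by_contra hneg
      exact hj.2 (h (Finset.mem_filter.mpr ⟨hj.1, not_le.mp hneg⟩))
  have hcond2 : ∀ (K I : Finset (Fin d)),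
      ((∀ j ∈ I \ K, 0 ≤ -(a I j)) ↔ I.filter (fun i => 0 < a I i) ⊆ K) := by
    intro K I
    constructor
    · intro h j hj
      rw [Finset.mem_filter] at hj
      by_contra hjK
      have h2 := h j (Finset.mem_sdiff.mpr ⟨hj.1, hjK⟩)
      rw [neg_nonneg] at h2
      exact absurd hj.2 (not_lt.mpr h2)
    · intro h j hj
      rw [Finset.mem_sdiff] at hj
      rw [neg_nonneg]
      by_contra hpos
      rw [not_le] at hpos
      exact hj.2 (h (Finset.mem_filter.mpr ⟨hj.1, hpos⟩))
  have hbneg : ∀ I ∈ Δ.S, I.card = n → -x = ∑ i ∈ I, -(a I i) • Δ.v i := by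
    intro I hI hIc
    rw [ha I hI hIc, ← Finset.sum_neg_distrib]
    exact Finset.sum_congr rfl fun i _ => (neg_smul _ _).symm
  -- Step 2: completeness applied to x and -x
  have step2 : ∀ K ∈ Δ.S,
      ∑ I ∈ Δ.S.filter (fun I => I.card = n),
        (if K ⊆ I ∧ I.filter (fun i => a I i < 0) ⊆ K then Δ.w I else 0)
    = ∑ I ∈ Δ.S.filter (fun I => I.card = n),
        (if K ⊆ I ∧ I.filter (fun i => 0 < a I i) ⊆ K then Δ.w I else 0) := by
    intro K hK
    have convert1 :
        ∑ I ∈ Δ.S.filter (fun I => I.card = n ∧ K ⊆ I ∧ ∀ j ∈ I \ K, 0 ≤ a I j), Δ.w I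
      = ∑ I ∈ Δ.S.filter (fun I => I.card = n),
          (if K ⊆ I ∧ I.filter (fun i => a I i < 0) ⊆ K then Δ.w I else 0) := by
      rw [Finset.sum_filter, Finset.sum_filter]
      apply Finset.sum_congr rfl
      intro I _
      by_cases h1 : I.card = n
      · simp only [h1, true_and, if_true]
        by_cases h2 : K ⊆ I
        · simp only [h2, true_and]
          by_cases h3 : I.filter (fun i => a I i < 0) ⊆ K
          · rw [if_pos ((hcond1 K I).mpr h3), if_pos h3]
          · rw [if_neg (fun hc => h3 ((hcond1 K I).mp hc)), if_neg h3]
        · simp [h2]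
      · simp [h1]
    have convert2 :
        ∑ I ∈ Δ.S.filter (fun I => I.card = n ∧ K ⊆ I ∧ ∀ j ∈ I \ K, 0 ≤ -(a I j)), Δ.w I
      = ∑ I ∈ Δ.S.filter (fun I => I.card = n),
          (if K ⊆ I ∧ I.filter (fun i => 0 < a I i) ⊆ K then Δ.w I else 0) := by
      rw [Finset.sum_filter, Finset.sum_filter]
      apply Finset.sum_congr rfl
      intro I _
      by_cases h1 : I.card = n
      · simp only [h1, true_and, if_true]
        by_cases h2 : K ⊆ I
        · simp only [h2, true_and]
          by_cases h3 : I.filter (fun i => 0 < a I i) ⊆ K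
          · rw [if_pos ((hcond2 K I).mpr h3), if_pos h3]
          · rw [if_neg (fun hc => h3 ((hcond2 K I).mp hc)), if_neg h3]
        · simp [h2]
      · simp [h1]
    have hgx : Δ.GenericFor K x := fun L hL _ h2 => hx L hL (Finset.empty_subset L) h2
    have hgnx : Δ.GenericFor K (-x) := by
      intro L hL h1 h2
      rw [Submodule.neg_mem_iff]
      exact hx L hL (Finset.empty_subset L) h2
    have hdv := (hC K hK).2 x (-x) hgx hgnx
    rw [MFAux.dv_formula Δ K x a ha,
        MFAux.dv_formula Δ K (-x) (fun I i => -(a I i)) hbneg] at hdv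
    rw [convert1, convert2] at hdv
    exact hdv
  -- counting subsets
  have hcount : ∀ I ∈ Δ.S, I.card = n → ∀ N, N ⊆ I → ∀ m, m ≤ n →
      ((Δ.S.filter (fun K => K.card = m)).filter (fun K => K ⊆ I ∧ N ⊆ K)).card
        = (n - N.card).choose (n - m) := by
    intro I hI hIc N hN m hm
    have hset : (Δ.S.filter (fun K => K.card = m)).filter (fun K => K ⊆ I ∧ N ⊆ K)
        = I.powerset.filter (fun K => N ⊆ K ∧ K.card = m) := by
      ext K
      simp only [Finset.mem_filter, Finset.mem_powerset]
      constructor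
      · rintro ⟨⟨-, h2⟩, h3, h4⟩
        exact ⟨h3, h4, h2⟩
      · rintro ⟨h1, h2, h3⟩
        exact ⟨⟨Δ.downClosed I hI K h1, h3⟩, h1, h2⟩
    rw [hset, MFAux.count_sub I N hN m (hIc ▸ hm), hIc]
  -- summation swap
  have hswap : ∀ (N : Finset (Fin d) → Finset (Fin d)),
      (∀ I ∈ Δ.S, I.card = n → N I ⊆ I) → ∀ m, m ≤ n →
      ∑ K ∈ Δ.S.filter (fun K => K.card = m),
        ∑ I ∈ Δ.S.filter (fun I => I.card = n),
          (if K ⊆ I ∧ N I ⊆ K then Δ.w I else 0)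
      = ∑ I ∈ Δ.S.filter (fun I => I.card = n),
          ((((n - (N I).card).choose (n - m) : ℕ)) : ℤ) * Δ.w I := by
    intro N hNs m hm
    rw [Finset.sum_comm]
    apply Finset.sum_congr rfl
    intro I hI
    have hI' := Finset.mem_filter.mp hI
    rw [← Finset.sum_filter, Finset.sum_const,
        hcount I hI'.1 hI'.2 (N I) (hNs I hI'.1 hI'.2) m hm, nsmul_eq_mul]
  -- cardinalities of positive/negative index sets
  have hpn : ∀ I ∈ Δ.S, I.card = n → (I.filter (fun i => 0 < a I i)).card ≤ n := by
    intro I _ hIc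
    rw [← hIc]; exact Finset.card_filter_le I _
  have hNcard : ∀ I ∈ Δ.S, I.card = n →
      (I.filter (fun i => a I i < 0)).card
        = n - (I.filter (fun i => 0 < a I i)).card := by
    intro I hI hIc
    have h1 := Finset.card_filter_add_card_filter_not
      (s := I) (p := fun i => 0 < a I i)
    have h2 : I.filter (fun i => ¬ 0 < a I i) = I.filter (fun i => a I i < 0) := by
      apply Finset.filter_congr
      intro i hi
      constructor
      · intro h'
        exact ((hne I hI hIc i hi).lt_or_gt).resolve_right h'
      · intro h'
        exact not_lt.mpr (le_of_lt h')
    rw [h2, hIc] at h1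
    omega
  -- the binomial identity
  have hstar : ∀ t, t ≤ n →
      ∑ I ∈ Δ.S.filter (fun I => I.card = n),
        (((I.filter (fun i => 0 < a I i)).card.choose t : ℕ) : ℤ) * Δ.w I
    = ∑ I ∈ Δ.S.filter (fun I => I.card = n),
        (((n - (I.filter (fun i => 0 < a I i)).card).choose t : ℕ) : ℤ) * Δ.w I := by
    intro t ht
    have hm : n - t ≤ n := Nat.sub_le n t
    have hsum : ∑ K ∈ Δ.S.filter (fun K => K.card = n - t),
        ∑ I ∈ Δ.S.filter (fun I => I.card = n),
          (if K ⊆ I ∧ I.filter (fun i => a I i < 0) ⊆ K then Δ.w I else 0)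
      = ∑ K ∈ Δ.S.filter (fun K => K.card = n - t),
        ∑ I ∈ Δ.S.filter (fun I => I.card = n),
          (if K ⊆ I ∧ I.filter (fun i => 0 < a I i) ⊆ K then Δ.w I else 0) :=
      Finset.sum_congr rfl fun K hK => step2 K (Finset.mem_filter.mp hK).1
    have h1 := hswap (fun I => I.filter (fun i => a I i < 0))
      (fun I _ _ => Finset.filter_subset _ I) (n - t) hm
    have h2 := hswap (fun I => I.filter (fun i => 0 < a I i))
      (fun I _ _ => Finset.filter_subset _ I) (n - t) hm
    have htt : n - (n - t) = t := Nat.sub_sub_self ht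
    rw [htt] at h1 h2
    have hL : ∑ I ∈ Δ.S.filter (fun I => I.card = n),
        (((n - (I.filter (fun i => a I i < 0)).card).choose t : ℕ) : ℤ) * Δ.w I
      = ∑ I ∈ Δ.S.filter (fun I => I.card = n),
        (((I.filter (fun i => 0 < a I i)).card.choose t : ℕ) : ℤ) * Δ.w I := by
      apply Finset.sum_congr rfl
      intro I hI
      have hI' := Finset.mem_filter.mp hI
      rw [hNcard I hI'.1 hI'.2, Nat.sub_sub_self (hpn I hI'.1 hI'.2)]
    rw [← hL, ← h1, hsum, h2]
  -- grouping by the number of positive coefficients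
  have hpn' : ∀ I ∈ Δ.S.filter (fun I => I.card = n),
      (I.filter (fun i => 0 < a I i)).card ∈ Finset.range (n+1) := by
    intro I hI
    have hI' := Finset.mem_filter.mp hI
    exact Finset.mem_range.mpr (Nat.lt_succ_of_le (hpn I hI'.1 hI'.2))
  have hgroup : ∀ (c : ℕ → ℕ),
      ∑ I ∈ Δ.S.filter (fun I => I.card = n),
        ((c ((I.filter (fun i => 0 < a I i)).card) : ℕ) : ℤ) * Δ.w I
    = ∑ r ∈ Finset.range (n+1), ((c r : ℕ) : ℤ) *
        ∑ I ∈ (Δ.S.filter (fun I => I.card = n)).filter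
            (fun I => (I.filter (fun i => 0 < a I i)).card = r), Δ.w I := by
    intro c
    rw [← Finset.sum_fiberwise_of_maps_to
      (g := fun I => (I.filter (fun i => 0 < a I i)).card) hpn'
      (fun I => ((c ((I.filter (fun i => 0 < a I i)).card) : ℕ) : ℤ) * Δ.w I)]
    apply Finset.sum_congr rfl
    intro r hr
    rw [Finset.mul_sum]
    apply Finset.sum_congr rfl
    intro I hI
    rw [(Finset.mem_filter.mp hI).2]
  -- put things together and apply binomial inversion
  have hFzero : ∀ r, r ≤ n →
      (∑ I ∈ (Δ.S.filter (fun I => I.card = n)).filter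
          (fun I => (I.filter (fun i => 0 < a I i)).card = r), Δ.w I)
    - (∑ I ∈ (Δ.S.filter (fun I => I.card = n)).filter
          (fun I => (I.filter (fun i => 0 < a I i)).card = n - r), Δ.w I) = 0 := by
    apply MFAux.vanish n
    intro t ht
    have e1 := hgroup (fun r => r.choose t)
    have e2 := hgroup (fun r => (n - r).choose t)
    have e3 : ∑ r ∈ Finset.range (n+1), (((n - r).choose t : ℕ) : ℤ) *
          ∑ I ∈ (Δ.S.filter (fun I => I.card = n)).filter
              (fun I => (I.filter (fun i => 0 < a I i)).card = r), Δ.w I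
        = ∑ r ∈ Finset.range (n+1), ((r.choose t : ℕ) : ℤ) *
          ∑ I ∈ (Δ.S.filter (fun I => I.card = n)).filter
              (fun I => (I.filter (fun i => 0 < a I i)).card = n - r), Δ.w I := by
      rw [← Finset.sum_range_reflect (fun j => ((j.choose t : ℕ) : ℤ) *
          ∑ I ∈ (Δ.S.filter (fun I => I.card = n)).filter
              (fun I => (I.filter (fun i => 0 < a I i)).card = n - j), Δ.w I) (n+1)]
      apply Finset.sum_congr rfl
      intro j hj
      have hj' : j ≤ n := by
        have := Finset.mem_range.mp hj; omega
      have h4 : n + 1 - 1 - j = n - j := by omega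
      rw [h4, Nat.sub_sub_self hj']
    calc ∑ r ∈ Finset.range (n+1),
          ((∑ I ∈ (Δ.S.filter (fun I => I.card = n)).filter
              (fun I => (I.filter (fun i => 0 < a I i)).card = r), Δ.w I)
          - ∑ I ∈ (Δ.S.filter (fun I => I.card = n)).filter
              (fun I => (I.filter (fun i => 0 < a I i)).card = n - r), Δ.w I)
            * ((r.choose t : ℕ) : ℤ)
        = (∑ r ∈ Finset.range (n+1), ((r.choose t : ℕ) : ℤ) *
            ∑ I ∈ (Δ.S.filter (fun I => I.card = n)).filter
                (fun I => (I.filter (fun i => 0 < a I i)).card = r), Δ.w I)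
          - ∑ r ∈ Finset.range (n+1), ((r.choose t : ℕ) : ℤ) *
            ∑ I ∈ (Δ.S.filter (fun I => I.card = n)).filter
                (fun I => (I.filter (fun i => 0 < a I i)).card = n - r), Δ.w I := by
          rw [← Finset.sum_sub_distrib]
          exact Finset.sum_congr rfl fun r _ => by ring
      _ = 0 := by rw [← e1, ← e3, ← e2, ← hstar t ht, sub_self]
  have hff : ∀ r, Δ.S.filter (fun I => I.card = n ∧
        (I.filter fun i => 0 < a I i).card = r)
      = (Δ.S.filter (fun I => I.card = n)).filter
          (fun I => (I.filter (fun i => 0 < a I i)).card = r) := by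
    intro r
    ext I
    simp [Finset.mem_filter, and_assoc]
  rw [hff q, hff (n - q)]
  have := hFzero q hq
  omega
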